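/- For generic parameters (specifically when e^{2α + kφ} ≠ 1 for all integers k with |k| ≤ N-1), the 2^N vectors ψ_ε = ⊗_{l=N}^{1}(e^{ε_l α + ε_l(∑_{k<l}ε_k)φ/2 + iθ}, 1)ᵀ, indexed by ε : Fin N → {-1,1}, are linearly independent in ℂ^{2^N}. -/

import Mathlib

open Matrix Complex

/-- The tensor-product vector `ψ_ε = ⊗_{l=N}^{1} (e^{ε_l α + ε_l(∑_{k<l}ε_k)φ/2 + iθ}, 1)ᵀ`,
indexed by `Fin N → Bool` with `true ↔ f₊`. -/
noncomputable def psiVec (α φ θ : ℂ) {N : ℕ} (ε : Fin N → ℤ) : (Fin N → Bool) → ℂ :=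
  fun f => ∏ j, if f j then
      Complex.exp ((ε j : ℂ) * α
        + (ε j : ℂ) * (∑ k ∈ Finset.univ.filter (fun k => k < j), (ε k : ℂ)) * φ / 2
        + Complex.I * θ)
    else 1

private lemma sum_filter_lt_castSucc {N : ℕ} (j : Fin N) (c : Fin (N + 1) → ℂ) :
    ∑ k ∈ Finset.univ.filter (fun k => k < Fin.castSucc j), c k
      = ∑ k ∈ Finset.univ.filter (fun k => k < j), c (Fin.castSucc k) := by
  rw [Finset.sum_filter, Finset.sum_filter, Fin.sum_univ_castSucc]
  simp [Fin.castSucc_lt_castSucc_iff, (Fin.castSucc_lt_last j).not_gt]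

private lemma sum_filter_lt_last {N : ℕ} (c : Fin (N + 1) → ℂ) :
    ∑ k ∈ Finset.univ.filter (fun k => k < Fin.last N), c k
      = ∑ k : Fin N, c (Fin.castSucc k) := by
  rw [Finset.sum_filter, Fin.sum_univ_castSucc]
  simp [Fin.castSucc_lt_last]

private lemma psiVec_snoc (α φ θ : ℂ) {N : ℕ} (ε : Fin (N + 1) → ℤ) (f : Fin N → Bool)
    (b : Bool) :
    psiVec α φ θ ε (Fin.snoc f b)
      = psiVec α φ θ (fun j => ε (Fin.castSucc j)) f *
        (if b then Complex.exp ((ε (Fin.last N) : ℂ) * α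
          + (ε (Fin.last N) : ℂ) * (∑ k : Fin N, (ε (Fin.castSucc k) : ℂ)) * φ / 2
          + Complex.I * θ) else 1) := by
  unfold psiVec
  rw [Fin.prod_univ_castSucc]
  congr 1
  · apply Finset.prod_congr rfl
    intro j _
    rw [Fin.snoc_castSucc, sum_filter_lt_castSucc]
  · rw [Fin.snoc_last, sum_filter_lt_last]

/-- For generic parameters (`e^{2α+kφ} ≠ 1` for all integers `|k| ≤ N-1`), the `2^N`
vectors `ψ_ε`, indexed by sign sequences `ε : Fin N → {-1,1}`, are linearly
independent. -/
theorem psi_linearly_independent (α φ θ : ℂ) (N : ℕ)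
    (h : ∀ k : ℤ, |k| ≤ (N : ℤ) - 1 → Complex.exp (2 * α + (k : ℂ) * φ) ≠ 1) :
    LinearIndependent ℂ
      (fun e : Fin N → Bool => psiVec α φ θ (fun j => if e j then (1 : ℤ) else -1)) := by
  revert h
  induction N with
  | zero =>
    intro _
    apply linearIndependent_unique_iff.mpr
    intro hc
    have := congrFun hc (fun i => i.elim0)
    simp [psiVec] at this
  | succ N ih =>
    intro h
    have IH := ih (fun k hk => h k (by push_cast at hk ⊢; omega))
    rw [Fintype.linearIndependent_iff] at IH ⊢
    intro g hg
    -- sum over snoc decomposition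
    have sum_snoc : ∀ (F : (Fin (N + 1) → Bool) → ℂ),
        ∑ e, F e = ∑ c : Bool, ∑ e' : Fin N → Bool, F (Fin.snoc e' c) := by
      intro F
      rw [← Fintype.sum_equiv (Fin.snocEquiv (fun _ => Bool))
        (fun p => F (Fin.snoc p.2 p.1)) F (fun p => rfl), Fintype.sum_prod_type]
    -- the weight attached to the last slot
    set W : (Fin N → Bool) → Bool → Bool → ℂ := fun e c b =>
      if b then Complex.exp (((if c then (1 : ℤ) else -1 : ℤ) : ℂ) * α
        + ((if c then (1 : ℤ) else -1 : ℤ) : ℂ)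
          * ((∑ k, (if e k then (1 : ℤ) else -1) : ℤ) : ℂ) * φ / 2 + Complex.I * θ)
      else 1 with hW
    -- factorization of psiVec along snoc
    have hfact : ∀ (e : Fin N → Bool) (c : Bool) (f : Fin N → Bool) (b : Bool),
        psiVec α φ θ (fun j => if Fin.snoc (α := fun _ => Bool) e c j then (1 : ℤ) else -1)
            (Fin.snoc f b)
          = psiVec α φ θ (fun j => if e j then (1 : ℤ) else -1) f * W e c b := by
      intro e c f b
      rw [show (fun j => if Fin.snoc (α := fun _ => Bool) e c j then (1 : ℤ) else -1)
            = Fin.snoc (fun j => if e j then (1 : ℤ) else -1) (if c then (1 : ℤ) else -1) by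
          funext j
          refine Fin.lastCases ?_ (fun j => ?_) j
          · simp
          · simp [Fin.snoc_castSucc]]
      rw [psiVec_snoc]
      simp only [Fin.snoc_castSucc, Fin.snoc_last, hW]
      congr 2
      push_cast
      ring_nf
    -- key pointwise relation
    have key : ∀ (b : Bool) (e : Fin N → Bool),
        ∑ c : Bool, g (Fin.snoc e c) * W e c b = 0 := by
      intro b e
      refine IH (fun e' => ∑ c : Bool, g (Fin.snoc e' c) * W e' c b) ?_ e
      funext f
      have h0 := congrFun hg (Fin.snoc f b)
      simp only [Finset.sum_apply, Pi.smul_apply, smul_eq_mul, Pi.zero_apply] at h0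
      rw [sum_snoc (fun e => g e *
        psiVec α φ θ (fun j => if e j then (1 : ℤ) else -1) (Fin.snoc f b))] at h0
      simp only [hfact] at h0
      simp only [Finset.sum_apply, Pi.smul_apply, smul_eq_mul, Pi.zero_apply]
      calc ∑ e' : Fin N → Bool, (∑ c : Bool, g (Fin.snoc e' c) * W e' c b)
              * psiVec α φ θ (fun j => if e' j then (1 : ℤ) else -1) f
          = ∑ e' : Fin N → Bool, ∑ c : Bool, g (Fin.snoc e' c)
              * (psiVec α φ θ (fun j => if e' j then (1 : ℤ) else -1) f * W e' c b) := by
            refine Finset.sum_congr rfl fun e' _ => ?_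
            rw [Finset.sum_mul]
            exact Finset.sum_congr rfl fun c _ => by ring
        _ = ∑ c : Bool, ∑ e' : Fin N → Bool, g (Fin.snoc e' c)
              * (psiVec α φ θ (fun j => if e' j then (1 : ℤ) else -1) f * W e' c b) :=
            Finset.sum_comm
        _ = 0 := h0
    -- derive vanishing of all coefficients
    have hzero : ∀ (e : Fin N → Bool) (c : Bool), g (Fin.snoc e c) = 0 := by
      intro e c
      have k0 := key false e
      have k1 := key true e
      rw [Fintype.sum_bool] at k0 k1
      have w0 : ∀ c', W e c' false = 1 := fun c' => by simp [hW]
      rw [w0, w0, mul_one, mul_one] at k0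
      have wt : W e true true
          = Complex.exp (α + ((∑ k, (if e k then (1 : ℤ) else -1) : ℤ) : ℂ) * φ / 2
            + Complex.I * θ) := by
        rw [hW]
        simp only [if_pos rfl]
        push_cast
        ring_nf
      have wf : W e false true
          = Complex.exp (-α - ((∑ k, (if e k then (1 : ℤ) else -1) : ℤ) : ℂ) * φ / 2
            + Complex.I * θ) := by
        rw [hW]
        simp only [if_pos rfl, Bool.false_eq_true, if_neg (by simp : ¬False)]
        norm_num
        congr 1
        ring
      rw [wt, wf] at k1
      have hSb : |∑ k, (if e k then (1 : ℤ) else -1)| ≤ (N : ℤ) := by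
        calc |∑ k, (if e k then (1 : ℤ) else -1)|
            ≤ ∑ k, |(if e k then (1 : ℤ) else -1)| := Finset.abs_sum_le_sum_abs _ _
          _ ≤ ∑ _k : Fin N, 1 := by
              refine Finset.sum_le_sum fun k _ => ?_
              split <;> simp
          _ = N := by simp
      have hne : Complex.exp (α + ((∑ k, (if e k then (1 : ℤ) else -1) : ℤ) : ℂ) * φ / 2
            + Complex.I * θ)
          ≠ Complex.exp (-α - ((∑ k, (if e k then (1 : ℤ) else -1) : ℤ) : ℂ) * φ / 2
            + Complex.I * θ) := by
        intro hc
        rw [Complex.exp_eq_exp_iff_exp_sub_eq_one] at hc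
        refine h (∑ k, (if e k then (1 : ℤ) else -1)) (by push_cast; omega) ?_
        rw [← hc]
        congr 1
        ring
      have hprod : g (Fin.snoc e true)
          * (Complex.exp (α + ((∑ k, (if e k then (1 : ℤ) else -1) : ℤ) : ℂ) * φ / 2
              + Complex.I * θ)
            - Complex.exp (-α - ((∑ k, (if e k then (1 : ℤ) else -1) : ℤ) : ℂ) * φ / 2
              + Complex.I * θ)) = 0 := by
        linear_combination k1 - Complex.exp (-α
          - ((∑ k, (if e k then (1 : ℤ) else -1) : ℤ) : ℂ) * φ / 2 + Complex.I * θ) * k0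
      have ht : g (Fin.snoc e true) = 0 :=
        (mul_eq_zero.mp hprod).resolve_right (sub_ne_zero.mpr hne)
      cases c
      · linear_combination k0 - ht
      · exact ht
    intro e
    have := hzero (Fin.init e) (e (Fin.last N))
    rwa [Fin.snoc_init_self] at this
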